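/- Let x be a root of unity with x ≠ 1, let n ≥ 0 be an integer, and let s ∈ ℂ with |s+n+1/2| < 1/2. Then Φ(s;x) = x^n · ∑_{m=0}^∞ ( (−1)^m · ti_{m+1}(x) − x · ti_{m+1}(x^{−1}) ) · (s+n+1/2)^m. -/

import Mathlib

open Filter Finset

/-- Limit of a sequence of complex numbers (junk value if divergent). -/
noncomputable def seqLim (f : ℕ → ℂ) : ℂ := lim (Filter.map f Filter.atTop)

/-- Finite sum `t_n(p;z) = ∑_{k=1}^n z^k/(k-1/2)^p`. -/
noncomputable def tFin (p : ℕ) (z : ℂ) (n : ℕ) : ℂ :=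
  ∑ k ∈ Finset.Icc 1 n, z ^ k / ((k : ℂ) - 1/2) ^ p

/-- t-polylogarithm `ti_p(z) = ∑_{n=1}^∞ z^n/(n-1/2)^p`, as limit of partial sums. -/
noncomputable def tpoly (p : ℕ) (z : ℂ) : ℂ :=
  seqLim (fun N => ∑ n ∈ Finset.Icc 1 N, z ^ n / ((n : ℂ) - 1/2) ^ p)

/-- `φ(s;x) = ∑_{k=0}^∞ x^k/(k+s)`, as limit of partial sums. -/
noncomputable def phi (s x : ℂ) : ℂ :=
  seqLim (fun N => ∑ k ∈ Finset.range N, x ^ k / ((k : ℂ) + s))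


/-- `Φ(s;x) = φ(s;x) - φ(-s;x⁻¹) - 1/s`. -/
noncomputable def PhiFn (s x : ℂ) : ℂ := phi s x - phi (-s) x⁻¹ - 1 / s


-- helper: Icc 1 N sums as range sums
lemma sum_Icc1 {M : Type*} [AddCommMonoid M] (f : ℕ → M) (N : ℕ) :
    ∑ j ∈ Icc 1 N, f j = ∑ i ∈ range N, f (i + 1) := by
  rw [← Finset.Ico_add_one_right_eq_Icc, Finset.sum_Ico_eq_sum_range]
  simp [Nat.add_comm]

-- Abel summation identity
lemma abel_partial (c g : ℕ → ℂ) (N : ℕ) :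
    ∑ k ∈ range N, c k * g k =
      (∑ k ∈ range N, c k) * g N
      + ∑ k ∈ range N, (∑ i ∈ range (k+1), c i) * (g k - g (k+1)) := by
  induction N with
  | zero => simp
  | succ N ih =>
    rw [sum_range_succ, ih, sum_range_succ (fun k => (∑ i ∈ range (k+1), c i) * (g k - g (k+1))),
      sum_range_succ c N]
    ring

lemma abel_tendsto (c g : ℕ → ℂ) (B : ℝ) (hB : ∀ N, ‖∑ k ∈ range N, c k‖ ≤ B)
    (hg : Tendsto g atTop (nhds 0))
    (hΔ : Summable fun k => ‖g k - g (k+1)‖) :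
    ∃ L, Tendsto (fun N => ∑ k ∈ range N, c k * g k) atTop (nhds L) := by
  have hsum : Summable fun k => (∑ i ∈ range (k+1), c i) * (g k - g (k+1)) := by
    apply Summable.of_norm_bounded (g := fun k => B * ‖g k - g (k+1)‖) (hΔ.mul_left B)
    intro k
    rw [norm_mul]
    exact mul_le_mul_of_nonneg_right (hB (k+1)) (norm_nonneg _)
  refine ⟨∑' k, (∑ i ∈ range (k+1), c i) * (g k - g (k+1)), ?_⟩
  have h1 : Tendsto (fun N => (∑ k ∈ range N, c k) * g N) atTop (nhds 0) := by
    have hb : Tendsto (fun N => B * ‖g N‖) atTop (nhds 0) := by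
      simpa using hg.norm.const_mul B
    apply squeeze_zero_norm (fun N => ?_) hb
    rw [norm_mul]
    exact mul_le_mul_of_nonneg_right (hB N) (norm_nonneg _)
  have h2 := hsum.hasSum.tendsto_sum_nat
  have := h1.add h2
  rw [zero_add] at this
  refine Tendsto.congr (fun N => (abel_partial c g N).symm) this

lemma geom_bound {z : ℂ} (hz : ‖z‖ = 1) (hz1 : z ≠ 1) (N : ℕ) :
    ‖∑ k ∈ range N, z ^ k‖ ≤ 2 / ‖z - 1‖ := by
  have h1 : (0:ℝ) < ‖z - 1‖ := norm_pos_iff.2 (sub_ne_zero.2 hz1)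
  rw [geom_sum_eq hz1, norm_div]
  apply div_le_div_of_nonneg_right ?_ h1.le
  calc ‖z ^ N - 1‖ ≤ ‖z ^ N‖ + ‖(1:ℂ)‖ := norm_sub_le _ _
  _ ≤ 2 := by rw [norm_pow, hz]; norm_num

lemma abel_icc {z : ℂ} (hz : ‖z‖ = 1) (hz1 : z ≠ 1) (g : ℕ → ℂ)
    (hg : Tendsto g atTop (nhds 0))
    (hΔ : Summable fun k => ‖g k - g (k+1)‖) :
    ∃ L, Tendsto (fun N => ∑ j ∈ Icc 1 N, z ^ j * g j) atTop (nhds L) := by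
  set c : ℕ → ℂ := fun k => z ^ k - (if k = 0 then 1 else 0) with hc
  have hB : ∀ N, ‖∑ k ∈ range N, c k‖ ≤ 2 / ‖z - 1‖ + 1 := by
    intro N
    have : ∑ k ∈ range N, c k
        = (∑ k ∈ range N, z ^ k) - ∑ k ∈ range N, (if k = 0 then (1:ℂ) else 0) := by
      rw [← Finset.sum_sub_distrib]
    rw [this]
    refine (norm_sub_le _ _).trans (add_le_add (geom_bound hz hz1 N) ?_)
    rcases N with _ | N
    · simp
    · rw [Finset.sum_ite_eq' (range (N+1)) 0 (fun _ => (1:ℂ))]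
      simp
  obtain ⟨L, hL⟩ := abel_tendsto c g _ hB hg hΔ
  refine ⟨L, ?_⟩
  have key : ∀ N, ∑ j ∈ Icc 1 N, z ^ j * g j = ∑ k ∈ range (N+1), c k * g k := by
    intro N
    rw [Finset.sum_range_succ' (fun k => c k * g k), sum_Icc1]
    simp [hc]
  have := hL.comp (tendsto_add_atTop_nat 1)
  refine Tendsto.congr (fun N => ?_) this
  exact (key N).symm

-- denominators: basic bounds
lemma half_le (j : ℕ) : (1/2 : ℝ) ≤ |(j:ℝ) - 1/2| := by
  rcases Nat.eq_zero_or_pos j with h | h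
  · rw [h, Nat.cast_zero, zero_sub, abs_neg, abs_of_nonneg] <;> norm_num
  · have h1 : (1:ℝ) ≤ j := by exact_mod_cast h
    rw [abs_of_nonneg (by linarith)]
    linarith

lemma norm_j_half (j : ℕ) : ‖((j:ℂ) - 1/2)‖ = |(j:ℝ) - 1/2| := by
  have : ((j:ℂ) - 1/2) = (((j:ℝ) - 1/2 : ℝ) : ℂ) := by push_cast; ring
  rw [this]
  exact Complex.norm_real _

lemma norm_j_half_u (j : ℕ) (u : ℂ) : ‖((j:ℂ) - 1/2 + u)‖ ≥ |(j:ℝ) - 1/2| - ‖u‖ := by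
  calc |(j:ℝ) - 1/2| - ‖u‖ = ‖((j:ℂ) - 1/2)‖ - ‖u‖ := by rw [norm_j_half]
  _ ≤ ‖((j:ℂ) - 1/2 + u)‖ := by
      have h3 : (j:ℂ) - 1/2 + u - u = (j:ℂ) - 1/2 := by ring
      have h4 := norm_sub_le ((j:ℂ) - 1/2 + u) u
      rw [h3] at h4
      linarith

section G1
variable {u : ℂ} (hu : ‖u‖ < 1/2)
include hu

lemma g1_norm_lb (j : ℕ) : (1/2 - ‖u‖) ≤ ‖((j:ℂ) - 1/2 + u)‖ := by
  have := norm_j_half_u j u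
  have := half_le j
  linarith

lemma g1_ne (j : ℕ) : ((j:ℂ) - 1/2 + u) ≠ 0 := by
  have := g1_norm_lb hu j
  intro h
  rw [h, norm_zero] at this
  linarith

lemma g1_norm_lb' (j : ℕ) : ((1/2 - ‖u‖)/2) * ((j:ℝ) + 1) ≤ ‖((j:ℂ) - 1/2 + u)‖ := by
  rcases Nat.eq_zero_or_pos j with h | h
  · rw [h]
    have h0 := g1_norm_lb hu 0
    simp only [Nat.cast_zero, zero_sub] at h0 ⊢
    linarith [norm_nonneg u]
  · have hj : (1:ℝ) ≤ j := by exact_mod_cast h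
    have h1 := norm_j_half_u j u
    have h2 : |(j:ℝ) - 1/2| = (j:ℝ) - 1/2 := abs_of_nonneg (by linarith)
    rw [h2] at h1
    nlinarith [norm_nonneg u]

lemma g1_tendsto : Tendsto (fun j : ℕ => ((j:ℂ) - 1/2 + u)⁻¹) atTop (nhds 0) := by
  set δ := (1/2 - ‖u‖)/2 with hδ
  have hδ0 : 0 < δ := by have := norm_nonneg u; rw [hδ]; linarith
  have hb : Tendsto (fun j : ℕ => δ⁻¹ * ((j:ℝ) + 1)⁻¹) atTop (nhds 0) := by
    have : Tendsto (fun j : ℕ => ((j:ℝ) + 1)⁻¹) atTop (nhds 0) := by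
      have := tendsto_one_div_add_atTop_nhds_zero_nat (𝕜 := ℝ)
      simpa [one_div] using this
    simpa using this.const_mul δ⁻¹
  apply squeeze_zero_norm (fun j => ?_) hb
  rw [norm_inv]
  have h1 := g1_norm_lb' hu j
  have h2 : (0:ℝ) < δ * ((j:ℝ) + 1) := by positivity
  rw [← hδ] at h1
  calc ‖((j:ℂ) - 1/2 + u)‖⁻¹ ≤ (δ * ((j:ℝ) + 1))⁻¹ := by
        apply inv_anti₀ h2 h1
  _ = δ⁻¹ * ((j:ℝ) + 1)⁻¹ := by rw [mul_inv]

lemma g1_summable : Summable fun j : ℕ => ‖((j:ℂ) - 1/2 + u)⁻¹ - (((j:ℕ)+1:ℂ) - 1/2 + u)⁻¹‖ := by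
  set δ := (1/2 - ‖u‖)/2 with hδ
  have hδ0 : 0 < δ := by have := norm_nonneg u; rw [hδ]; linarith
  have hsum : Summable fun j : ℕ => (δ^2)⁻¹ * (((j:ℝ)+1)^2)⁻¹ := by
    apply Summable.mul_left
    have : Summable (fun n : ℕ => 1 / (n:ℝ) ^ 2) := by
      rw [Real.summable_one_div_nat_pow]; norm_num
    have := (summable_nat_add_iff 1).mpr this
    simpa [one_div] using this
  apply Summable.of_nonneg_of_le (fun j => norm_nonneg _) (fun j => ?_) hsum
  have haj : ((j:ℂ) - 1/2 + u) ≠ 0 := g1_ne hu j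
  have hbj : (((j:ℕ)+1:ℂ) - 1/2 + u) ≠ 0 := by
    have := g1_ne hu (j+1)
    simpa using this
  have key : ((j:ℂ) - 1/2 + u)⁻¹ - (((j:ℕ)+1:ℂ) - 1/2 + u)⁻¹
      = (((j:ℂ) - 1/2 + u) * (((j:ℕ)+1:ℂ) - 1/2 + u))⁻¹ := by
    rw [inv_sub_inv haj hbj]
    have h5 : (((j:ℕ)+1:ℂ) - 1/2 + u) - ((j:ℂ) - 1/2 + u) = 1 := by push_cast; ring
    rw [h5, one_div]
  rw [key, norm_inv, norm_mul]
  have h1 := g1_norm_lb' hu j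
  have h2 := g1_norm_lb' hu (j+1)
  push_cast at h2
  have hj1 : (0:ℝ) < (j:ℝ) + 1 := by positivity
  have hj2 : (0:ℝ) < (j:ℝ) + 1 + 1 := by linarith
  have e1 : (0:ℝ) < δ * ((j:ℝ)+1) := by positivity
  have e2 : (0:ℝ) < δ * ((j:ℝ)+1+1) := by positivity
  rw [← hδ] at h1 h2
  have hprod : δ^2 * (((j:ℝ)+1)^2) ≤ ‖((j:ℂ) - 1/2 + u)‖ * ‖(((j:ℕ)+1:ℂ) - 1/2 + u)‖ := by
    have := mul_le_mul h1 h2 e2.le (norm_nonneg _)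
    push_cast
    nlinarith [this]
  calc (‖((j:ℂ) - 1/2 + u)‖ * ‖(((j:ℕ)+1:ℂ) - 1/2 + u)‖)⁻¹
      ≤ (δ^2 * (((j:ℝ)+1)^2))⁻¹ := by
        apply inv_anti₀ (by positivity) hprod
  _ = (δ^2)⁻¹ * (((j:ℝ)+1)^2)⁻¹ := by rw [mul_inv]

end G1

lemma g2_ne (j : ℕ) : ((j:ℂ) - 1/2) ≠ 0 := by
  intro h
  have := half_le j
  rw [← norm_j_half, h, norm_zero] at this
  linarith

lemma g2_tendsto (p : ℕ) (hp : 1 ≤ p) :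
    Tendsto (fun j : ℕ => (((j:ℂ) - 1/2)^p)⁻¹) atTop (nhds 0) := by
  obtain ⟨q, rfl⟩ : ∃ q, p = q + 1 := ⟨p-1, (Nat.succ_pred_eq_of_pos hp).symm⟩
  have hb : Tendsto (fun j : ℕ => (2:ℝ)^(q+1) * (1/(j:ℝ))) atTop (nhds 0) := by
    simpa using tendsto_one_div_atTop_nhds_zero_nat.const_mul ((2:ℝ)^(q+1))
  apply squeeze_zero_norm' ?_ hb
  filter_upwards [eventually_ge_atTop 1] with j hj
  have hj1 : (1:ℝ) ≤ j := by exact_mod_cast hj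
  have hj0 : (j:ℝ) ≠ 0 := by linarith
  rw [norm_inv, norm_pow, norm_j_half, abs_of_nonneg (by linarith)]
  have hlb : ((j:ℝ)/2) * (1/2)^q ≤ ((j:ℝ) - 1/2)^(q+1) := by
    calc ((j:ℝ)/2) * (1/2)^q ≤ ((j:ℝ) - 1/2) * ((j:ℝ) - 1/2)^q := by
          apply mul_le_mul (by linarith) (pow_le_pow_left₀ (by norm_num) (by linarith) _)
            (by positivity) (by linarith)
    _ = ((j:ℝ) - 1/2)^(q+1) := by ring
  have hpos : (0:ℝ) < ((j:ℝ)/2) * (1/2)^q := by positivity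
  have heq : (((j:ℝ)/2) * (1/2)^q)⁻¹ = (2:ℝ)^(q+1) * (1/(j:ℝ)) := by
    rw [one_div (2:ℝ), inv_pow]
    field_simp
    ring
  calc (((j:ℝ) - 1/2)^(q+1))⁻¹ ≤ (((j:ℝ)/2) * (1/2)^q)⁻¹ := inv_anti₀ hpos hlb
  _ = (2:ℝ)^(q+1) * (1/(j:ℝ)) := heq

lemma g2_summable (p : ℕ) :
    Summable fun j : ℕ => ‖(((j:ℂ) - 1/2)^p)⁻¹ - ((((j:ℕ)+1:ℂ) - 1/2)^p)⁻¹‖ := by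
  rw [← summable_nat_add_iff 1]
  set r : ℕ → ℝ := fun j => (((j:ℝ) + 1/2)^p)⁻¹ with hr
  have hrpos : ∀ j : ℕ, (0:ℝ) < ((j:ℝ) + 1/2)^p := fun j => by positivity
  have hmono : ∀ j : ℕ, r (j+1) ≤ r j := by
    intro j
    have hb : ((j:ℝ) + 1/2) ≤ (((j+1:ℕ)):ℝ) + 1/2 := by push_cast; linarith
    exact inv_anti₀ (hrpos _) (pow_le_pow_left₀ (by positivity) hb p)
  have hcast : ∀ j : ℕ, (((j:ℂ) + 1 - 1/2)^p)⁻¹ = ((r j : ℝ) : ℂ) := by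
    intro j
    have h : ((j:ℂ) + 1 - 1/2) = (((j:ℝ) + 1/2 : ℝ) : ℂ) := by push_cast; ring
    rw [hr, h, ← Complex.ofReal_pow, ← Complex.ofReal_inv]
  have hsum : Summable fun j => r j - r (j+1) := by
    apply summable_of_sum_range_le (fun j => by linarith [hmono j])
    intro N
    rw [Finset.sum_range_sub' r N]
    have : 0 ≤ r N := le_of_lt (by positivity)
    linarith
  apply Summable.congr hsum
  intro j
  have e1 : (((j+1:ℕ)):ℂ) = ((j:ℂ) + 1) := by push_cast; ring
  have h1 := hcast j
  have h2 := hcast (j+1)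
  rw [e1] at h2
  rw [e1, h1, h2, ← Complex.ofReal_sub, Complex.norm_real, Real.norm_eq_abs,
    abs_of_nonneg (by linarith [hmono j])]

-- per-term truncation identity
lemma trunc_id (a u : ℂ) (ha : a ≠ 0) (hau : a + u ≠ 0) (M : ℕ) :
    (a + u)⁻¹ = (∑ m ∈ range M, (-1)^m * u^m * (a^(m+1))⁻¹)
      + (-u)^M * ((a^M) * (a + u))⁻¹ := by
  induction M with
  | zero => simp
  | succ M ih =>
    rw [sum_range_succ, ih]
    have key : (-u)^M * ((a^M) * (a + u))⁻¹
        = (-1)^M * u^M * (a^(M+1))⁻¹ + (-u)^(M+1) * ((a^(M+1)) * (a + u))⁻¹ := by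
      have hpM : (a:ℂ)^M ≠ 0 := pow_ne_zero _ ha
      have hpM1 : (a:ℂ)^(M+1) ≠ 0 := pow_ne_zero _ ha
      field_simp
      ring
    rw [key]
    ring

-- telescoping bound  ∑_{j∈Icc 1 N} tb j ≤ ε, for M = M' + 2
lemma remainder_bound {u : ℂ} (hu : ‖u‖ < 1/2) (M' N : ℕ) :
    ∑ j ∈ Icc 1 N, ‖u‖^(M'+2) * ((((j:ℝ) - 1/2)^(M'+2)) * ‖((j:ℂ) - 1/2 + u)‖)⁻¹
      ≤ (2*‖u‖)^(M'+2) * (1/2 - ‖u‖)⁻¹ + (9/4) * ((2*‖u‖)/3)^(M'+2) := by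
  set M := M' + 2 with hM
  set c := ‖u‖ with hc
  have hc0 : 0 ≤ c := norm_nonneg u
  have hδ : (0:ℝ) < 1/2 - c := by linarith
  set K := (9/4) * ((2*c)/3)^M with hK
  have hK0 : 0 ≤ K := by positivity
  have hKeq : K = c^M * (2/3)^M' := by
    rw [hK, hM, div_pow, div_pow (2:ℝ), mul_pow, pow_add, pow_add, pow_add]
    field_simp
    ring
  set tb : ℕ → ℝ := fun j => c^M * ((((j:ℝ) - 1/2)^M) * ‖((j:ℂ) - 1/2 + u)‖)⁻¹ with htb
  set μ : ℕ → ℝ := fun N => if N = 0 then 0 else 1 - 1/(N:ℝ) with hμ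
  have hμ0 : μ 0 = 0 := by simp [hμ]
  have hμpos : ∀ N : ℕ, 0 < N → μ N = 1 - 1/(N:ℝ) := by
    intro N h
    simp [hμ, Nat.pos_iff_ne_zero.mp h]
  have hμle : ∀ N, μ N ≤ 1 := by
    intro N
    rcases Nat.eq_zero_or_pos N with h | h
    · rw [h, hμ0]; norm_num
    · have h1 : (0:ℝ) < N := by exact_mod_cast h
      rw [hμpos N h]
      have : 0 < 1/(N:ℝ) := by positivity
      linarith
  have hA0 : (0:ℝ) ≤ (2*c)^M * (1/2 - c)⁻¹ :=
    mul_nonneg (pow_nonneg (by linarith) _) (inv_nonneg.2 hδ.le)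
  have htb1 : tb 1 ≤ (2*c)^M * (1/2 - c)⁻¹ := by
    have hD := g1_norm_lb hu 1
    have hDpos : (0:ℝ) < ‖((1:ℕ):ℂ) - 1/2 + u‖ := lt_of_lt_of_le hδ hD
    have e : (((1:ℕ):ℝ) - 1/2) = 1/2 := by norm_num
    rw [htb]
    simp only [e]
    have step1 : ((1/2:ℝ)^M * ‖((1:ℕ):ℂ) - 1/2 + u‖)⁻¹ ≤ ((1/2:ℝ)^M * (1/2 - c))⁻¹ := by
      apply inv_anti₀ (by positivity)
      exact mul_le_mul_of_nonneg_left hD (by positivity)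
    calc c^M * ((1/2:ℝ)^M * ‖((1:ℕ):ℂ) - 1/2 + u‖)⁻¹
        ≤ c^M * ((1/2:ℝ)^M * (1/2 - c))⁻¹ :=
          mul_le_mul_of_nonneg_left step1 (by positivity)
    _ = (2*c)^M * (1/2 - c)⁻¹ := by
        rw [mul_inv, ← mul_assoc]
        congr 1
        rw [show ((1/2:ℝ)^M)⁻¹ = (2:ℝ)^M by rw [← inv_pow]; norm_num, mul_pow]
        ring
  have htbj : ∀ N : ℕ, 1 ≤ N → tb (N+1) ≤ K * (1/((N:ℝ)*(N+1))) := by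
    intro N hN
    have hN1 : (1:ℝ) ≤ N := by exact_mod_cast hN
    have ha : (((N+1:ℕ)):ℝ) - 1/2 = (N:ℝ) + 1/2 := by push_cast; ring
    have hD : (N:ℝ) ≤ ‖(((N+1:ℕ)):ℂ) - 1/2 + u‖ := by
      have h1 := norm_j_half_u (N+1) u
      have h2 : |(((N+1:ℕ)):ℝ) - 1/2| = (N:ℝ) + 1/2 := by
        rw [ha]; exact abs_of_nonneg (by linarith)
      rw [h2] at h1
      linarith
    have hDpos : (0:ℝ) < ‖(((N+1:ℕ)):ℂ) - 1/2 + u‖ := lt_of_lt_of_le (by linarith) hD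
    have hpow : (3/2:ℝ)^M' * ((N:ℝ)*((N:ℝ)+1)) ≤ ((N:ℝ) + 1/2)^M := by
      have e1 : ((N:ℝ) + 1/2)^M = ((N:ℝ) + 1/2)^M' * ((N:ℝ) + 1/2)^2 := by
        rw [hM, pow_add]
      rw [e1]
      apply mul_le_mul
      · exact pow_le_pow_left₀ (by norm_num) (by linarith) _
      · nlinarith
      · nlinarith
      · positivity
    have hprod : (3/2:ℝ)^M' * ((N:ℝ)*((N:ℝ)+1)) * (N:ℝ)
        ≤ ((((N+1:ℕ)):ℝ) - 1/2)^M * ‖(((N+1:ℕ)):ℂ) - 1/2 + u‖ := by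
      rw [ha]
      apply mul_le_mul hpow hD (by linarith)
      positivity
    have hple : ((((N+1:ℕ)):ℝ) - 1/2)^M * ‖(((N+1:ℕ)):ℂ) - 1/2 + u‖ ≥
        (3/2:ℝ)^M' * ((N:ℝ)*((N:ℝ)+1)) := by
      calc (3/2:ℝ)^M' * ((N:ℝ)*((N:ℝ)+1))
          = (3/2:ℝ)^M' * ((N:ℝ)*((N:ℝ)+1)) * 1 := by ring
      _ ≤ (3/2:ℝ)^M' * ((N:ℝ)*((N:ℝ)+1)) * (N:ℝ) := by
          apply mul_le_mul_of_nonneg_left hN1 (by positivity)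
      _ ≤ _ := hprod
    have : tb (N+1) ≤ c^M * ((3/2:ℝ)^M' * ((N:ℝ)*((N:ℝ)+1)))⁻¹ := by
      rw [htb]
      apply mul_le_mul_of_nonneg_left _ (by positivity)
      exact inv_anti₀ (by positivity) hple
    refine this.trans (le_of_eq ?_)
    rw [hKeq, mul_inv, div_pow, div_pow (2:ℝ), one_div, mul_inv]
    field_simp
  have main : ∀ N, ∑ j ∈ Icc 1 N, tb j ≤ (2*c)^M * (1/2 - c)⁻¹ + K * μ N := by
    intro N
    induction N with
    | zero =>
      have h1 : (Icc 1 0 : Finset ℕ) = ∅ := by simp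
      rw [h1, Finset.sum_empty, hμ]
      norm_num
      linarith
    | succ N ih =>
      rw [Finset.sum_Icc_succ_top (Nat.le_add_left 1 N)]
      rcases Nat.eq_zero_or_pos N with h0 | h0
      · subst h0
        have h1 : (Icc 1 0 : Finset ℕ) = ∅ := by simp
        rw [h1, Finset.sum_empty, zero_add]
        have hμ1 : μ 1 = 0 := by rw [hμ]; norm_num
        rw [hμ1, mul_zero, add_zero]
        exact htb1
      · have hN1 : (1:ℝ) ≤ N := by exact_mod_cast h0
        have hμN : μ N = 1 - 1/(N:ℝ) := hμpos N h0
        have hμN1 : μ (N+1) = 1 - 1/((N:ℝ)+1) := by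
          rw [hμpos (N+1) (Nat.succ_pos N)]; push_cast; ring_nf
        have hstep := htbj N h0
        have hdiff : K * (1/((N:ℝ)*(N+1))) = K * (μ (N+1) - μ N) := by
          rw [hμN, hμN1]
          have hN0 : (N:ℝ) ≠ 0 := by linarith
          have hN10 : (N:ℝ)+1 ≠ 0 := by linarith
          field_simp
          ring
        rw [hdiff] at hstep
        linarith
  calc ∑ j ∈ Icc 1 N, tb j ≤ (2*c)^M * (1/2 - c)⁻¹ + K * μ N := main N
  _ ≤ (2*c)^M * (1/2 - c)⁻¹ + K * 1 := by
      apply add_le_add_right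
      exact mul_le_mul_of_nonneg_left (hμle N) hK0
  _ = (2*c)^M * (1/2 - c)⁻¹ + (9/4) * ((2*c)/3)^M := by rw [mul_one, hK]

lemma expansion {z u : ℂ} (hz : ‖z‖ = 1) (hz1 : z ≠ 1) (hu : ‖u‖ < 1/2) {L : ℂ}
    (hL : Tendsto (fun N : ℕ => ∑ j ∈ Icc 1 N, z^j * ((j:ℂ) - 1/2 + u)⁻¹) atTop (nhds L))
    (T : ℕ → ℂ) (hT : ∀ m, Tendsto (fun N : ℕ => tFin (m+1) z N) atTop (nhds (T m))) :
    Tendsto (fun M => ∑ m ∈ range M, (-1:ℂ)^m * u^m * T m) atTop (nhds L) := by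
  set c := ‖u‖ with hc
  have hc0 : (0:ℝ) ≤ c := norm_nonneg u
  have h2c : 2*c < 1 := by linarith
  set ε : ℕ → ℝ := fun M => (2*c)^M * (1/2 - c)⁻¹ + (9/4) * ((2*c)/3)^M with hε
  have hεto : Tendsto ε atTop (nhds 0) := by
    have t1 : Tendsto (fun M : ℕ => (2*c)^M) atTop (nhds 0) :=
      tendsto_pow_atTop_nhds_zero_of_lt_one (by linarith) h2c
    have t2 : Tendsto (fun M : ℕ => ((2*c)/3)^M) atTop (nhds 0) :=
      tendsto_pow_atTop_nhds_zero_of_lt_one (by positivity) (by linarith)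
    have := (t1.mul_const ((1/2 - c)⁻¹)).add (t2.const_mul (9/4))
    simpa [hε] using this
  -- truncation identity
  have key : ∀ (M N : ℕ), (∑ j ∈ Icc 1 N, z^j * ((j:ℂ) - 1/2 + u)⁻¹)
      = (∑ m ∈ range M, (-1:ℂ)^m * u^m * tFin (m+1) z N)
        + ∑ j ∈ Icc 1 N, z^j * ((-u)^M * ((((j:ℂ) - 1/2)^M) * ((j:ℂ) - 1/2 + u))⁻¹) := by
    intro M N
    have h1 : ∀ j ∈ Icc 1 N, z^j * ((j:ℂ) - 1/2 + u)⁻¹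
        = (∑ m ∈ range M, (-1:ℂ)^m * u^m * (z^j * ((((j:ℂ) - 1/2)^(m+1))⁻¹)))
          + z^j * ((-u)^M * ((((j:ℂ) - 1/2)^M) * ((j:ℂ) - 1/2 + u))⁻¹) := by
      intro j _
      rw [trunc_id ((j:ℂ) - 1/2) u (g2_ne j) (g1_ne hu j) M, mul_add, mul_sum]
      congr 1
      apply sum_congr rfl
      intro m _
      ring
    rw [Finset.sum_congr rfl h1, Finset.sum_add_distrib]
    congr 1
    rw [Finset.sum_comm]
    apply sum_congr rfl
    intro m _
    rw [tFin, Finset.mul_sum]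
    apply sum_congr rfl
    intro j _
    ring
  have hrem : ∀ (M' N : ℕ),
      ‖∑ j ∈ Icc 1 N, z^j * ((-u)^(M'+2) * ((((j:ℂ) - 1/2)^(M'+2)) * ((j:ℂ) - 1/2 + u))⁻¹)‖
        ≤ ε (M'+2) := by
    intro M' N
    calc ‖∑ j ∈ Icc 1 N, z^j * ((-u)^(M'+2) * ((((j:ℂ) - 1/2)^(M'+2)) * ((j:ℂ) - 1/2 + u))⁻¹)‖
        ≤ ∑ j ∈ Icc 1 N, ‖z^j * ((-u)^(M'+2) * ((((j:ℂ) - 1/2)^(M'+2)) * ((j:ℂ) - 1/2 + u))⁻¹)‖ :=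
          norm_sum_le _ _
    _ ≤ ∑ j ∈ Icc 1 N, c^(M'+2) * ((((j:ℝ) - 1/2)^(M'+2)) * ‖((j:ℂ) - 1/2 + u)‖)⁻¹ := by
        apply Finset.sum_le_sum
        intro j hj
        have hj1 : 1 ≤ j := (Finset.mem_Icc.mp hj).1
        have hj1' : (1:ℝ) ≤ (j:ℝ) := by exact_mod_cast hj1
        have e : ‖z^j * ((-u)^(M'+2) * ((((j:ℂ) - 1/2)^(M'+2)) * ((j:ℂ) - 1/2 + u))⁻¹)‖
            = c^(M'+2) * ((((j:ℝ) - 1/2)^(M'+2)) * ‖((j:ℂ) - 1/2 + u)‖)⁻¹ := by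
          rw [norm_mul, norm_pow, hz, one_pow, one_mul, norm_mul, norm_pow, norm_neg,
            norm_inv, norm_mul, norm_pow, norm_j_half, abs_of_nonneg (by linarith)]
        rw [e]
    _ ≤ ε (M'+2) := remainder_bound hu M' N
  have hpartial : ∀ (M : ℕ), Tendsto (fun N : ℕ =>
      (∑ j ∈ Icc 1 N, z^j * ((j:ℂ) - 1/2 + u)⁻¹)
        - ∑ m ∈ range M, (-1:ℂ)^m * u^m * tFin (m+1) z N) atTop
      (nhds (L - ∑ m ∈ range M, (-1:ℂ)^m * u^m * T m)) := by
    intro M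
    apply hL.sub
    apply tendsto_finset_sum
    intro m _
    exact (hT m).const_mul _
  have hbound : ∀ M', ‖L - ∑ m ∈ range (M'+2), (-1:ℂ)^m * u^m * T m‖ ≤ ε (M'+2) := by
    intro M'
    apply le_of_tendsto (hpartial (M'+2)).norm
    filter_upwards with N
    have hk := key (M'+2) N
    rw [show (∑ j ∈ Icc 1 N, z^j * ((j:ℂ) - 1/2 + u)⁻¹)
          - ∑ m ∈ range (M'+2), (-1:ℂ)^m * u^m * tFin (m+1) z N
        = ∑ j ∈ Icc 1 N, z^j * ((-u)^(M'+2) * ((((j:ℂ) - 1/2)^(M'+2)) * ((j:ℂ) - 1/2 + u))⁻¹)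
      by rw [hk]; ring]
    exact hrem M' N
  apply tendsto_sub_nhds_zero_iff.mp
  apply squeeze_zero_norm' ?_ hεto
  filter_upwards [eventually_ge_atTop 2] with M hM
  obtain ⟨M', rfl⟩ : ∃ M', M = M'+2 := ⟨M - 2, by omega⟩
  rw [norm_sub_rev]
  exact hbound M'

lemma seqLim_eq {f : ℕ → ℂ} {L : ℂ} (h : Tendsto f atTop (nhds L)) : seqLim f = L := by
  have e : seqLim f = limUnder atTop f := rfl
  rw [e]
  exact h.limUnder_eq

lemma g1_summable' {u : ℂ} (hu : ‖u‖ < 1/2) :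
    Summable fun j : ℕ => ‖((j:ℂ) - 1/2 + u)⁻¹ - (((j+1:ℕ):ℂ) - 1/2 + u)⁻¹‖ := by
  apply (g1_summable hu).congr
  intro j
  have e : (((j:ℕ)+1:ℂ)) = (((j+1:ℕ)):ℂ) := by push_cast; ring
  rw [e]

lemma g2_summable' (p : ℕ) :
    Summable fun j : ℕ => ‖(((j:ℂ) - 1/2)^p)⁻¹ - ((((j+1:ℕ):ℂ) - 1/2)^p)⁻¹‖ := by
  apply (g2_summable p).congr
  intro j
  have e : (((j:ℕ)+1:ℂ)) = (((j+1:ℕ)):ℂ) := by push_cast; ring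
  rw [e]

lemma tpoly_lim {z : ℂ} (hz : ‖z‖ = 1) (hz1 : z ≠ 1) (m : ℕ) :
    ∃ T, Tendsto (fun N : ℕ => tFin (m+1) z N) atTop (nhds T) := by
  obtain ⟨T, hT⟩ := abel_icc hz hz1 (fun j => (((j:ℂ) - 1/2)^(m+1))⁻¹)
    (g2_tendsto (m+1) (Nat.le_add_left 1 m)) (g2_summable' (m+1))
  refine ⟨T, hT.congr fun N => ?_⟩
  rw [tFin]
  apply sum_congr rfl
  intro j _
  ring

theorem stmt2 (x : ℂ) (hx : ∃ m : ℕ, 0 < m ∧ x ^ m = 1) (hx1 : x ≠ 1)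
    (n : ℕ) (s : ℂ) (hs : ‖s + n + 1/2‖ < 1/2) :
    PhiFn s x = x ^ n * seqLim (fun N => ∑ m ∈ Finset.range N,
      ((-1 : ℂ) ^ m * tpoly (m + 1) x - x * tpoly (m + 1) x⁻¹) * (s + n + 1/2) ^ m) := by
  obtain ⟨m0, hm0, hxm⟩ := hx
  have hx0 : x ≠ 0 := by
    intro h
    rw [h, zero_pow hm0.ne'] at hxm
    exact zero_ne_one hxm
  have hnx : ‖x‖ = 1 := by
    have h1 : ‖x‖^m0 = 1 := by rw [← norm_pow, hxm, norm_one]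
    rcases lt_trichotomy ‖x‖ 1 with h | h | h
    · have := pow_lt_one₀ (norm_nonneg x) h hm0.ne'
      rw [h1] at this; exact absurd this (lt_irrefl 1)
    · exact h
    · have := one_lt_pow₀ h hm0.ne'
      rw [h1] at this; exact absurd this (lt_irrefl 1)
  have hnxi : ‖x⁻¹‖ = 1 := by rw [norm_inv, hnx]; norm_num
  have hxi1 : x⁻¹ ≠ 1 := fun h => hx1 (inv_eq_one.mp h)
  set w := s + (n:ℂ) + 1/2 with hw
  have huw : ‖w‖ < 1/2 := hs
  have huw' : ‖-w‖ < 1/2 := by rw [norm_neg]; exact huw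
  -- limits of the two inner series
  obtain ⟨L1, hL1⟩ := abel_icc hnx hx1 (fun j => ((j:ℂ) - 1/2 + w)⁻¹)
    (g1_tendsto huw) (g1_summable' huw)
  obtain ⟨L2, hL2⟩ := abel_icc hnxi hxi1 (fun j => ((j:ℂ) - 1/2 + (-w))⁻¹)
    (g1_tendsto huw') (g1_summable' huw')
  -- tpoly limits
  choose Tx hTx using fun m => tpoly_lim hnx hx1 m
  choose Ty hTy using fun m => tpoly_lim hnxi hxi1 m
  have hTxeq : ∀ m, tpoly (m+1) x = Tx m := fun m => seqLim_eq (hTx m)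
  have hTyeq : ∀ m, tpoly (m+1) x⁻¹ = Ty m := fun m => seqLim_eq (hTy m)
  -- expansions
  have hexp1 : Tendsto (fun M => ∑ m ∈ range M, (-1:ℂ)^m * w^m * Tx m) atTop (nhds L1) :=
    expansion hnx hx1 huw hL1 Tx hTx
  have hexp2 : Tendsto (fun M => ∑ m ∈ range M, (-1:ℂ)^m * (-w)^m * Ty m) atTop (nhds L2) :=
    expansion hnxi hxi1 huw' hL2 Ty hTy
  -- RHS value
  have hRHS : seqLim (fun N => ∑ m ∈ Finset.range N,
      ((-1 : ℂ) ^ m * tpoly (m + 1) x - x * tpoly (m + 1) x⁻¹) * w ^ m) = L1 - x * L2 := by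
    apply seqLim_eq
    have h := hexp1.sub (hexp2.const_mul x)
    apply Tendsto.congr ?_ h
    intro M
    rw [Finset.mul_sum, ← Finset.sum_sub_distrib]
    apply sum_congr rfl
    intro m _
    have e : (-1:ℂ)^m * (-w)^m = w^m := by
      rw [← mul_pow]
      norm_num
    rw [hTxeq m, hTyeq m, e]
    ring
  -- phi s x
  set C0 := ∑ k ∈ range (n+1), x^k / ((k:ℂ) + s) with hC0def
  have hI1 : ∀ N : ℕ, ∑ k ∈ range (N+(n+1)), x^k / ((k:ℂ) + s)
      = C0 + x^n * ∑ j ∈ Icc 1 N, x^j * ((j:ℂ) - 1/2 + w)⁻¹ := by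
    intro N
    induction N with
    | zero => simp [hC0def]
    | succ N ih =>
      have e1 : N + 1 + (n+1) = (N + (n+1)) + 1 := by ring
      rw [e1, sum_range_succ, ih, Finset.sum_Icc_succ_top (Nat.le_add_left 1 N)]
      have e2 : ((N + (n+1) : ℕ):ℂ) + s = (((N+1:ℕ)):ℂ) - 1/2 + w := by
        push_cast
        rw [hw]
        ring
      rw [e2]
      have e3 : x^(N+(n+1)) = x^n * x^(N+1) := by
        rw [← pow_add]
        congr 1
        ring
      rw [div_eq_mul_inv, e3]
      ring
  have hphi1 : phi s x = C0 + x^n * L1 := by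
    apply seqLim_eq
    have h := (tendsto_const_nhds (x := C0)).add (hL1.const_mul (x^n))
    have h2 : Tendsto (fun N => ∑ k ∈ range (N+(n+1)), x^k / ((k:ℂ) + s)) atTop
        (nhds (C0 + x^n * L1)) := by
      apply Tendsto.congr ?_ h
      intro N
      exact (hI1 N).symm
    exact (tendsto_add_atTop_iff_nat (n+1)).mp h2
  -- phi (-s) x⁻¹
  set D0 := ∑ j ∈ Icc 1 n, (x⁻¹)^j * ((j:ℂ) - 1/2 + (-w))⁻¹ with hD0def
  have hI2 : ∀ N : ℕ, ∑ k ∈ range N, (x⁻¹)^k / ((k:ℂ) + (-s))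
      = x^(n+1) * ((∑ j ∈ Icc 1 (N+n), (x⁻¹)^j * ((j:ℂ) - 1/2 + (-w))⁻¹) - D0) := by
    intro N
    induction N with
    | zero =>
      simp only [Nat.zero_add, range_zero, Finset.sum_empty]
      rw [← hD0def, sub_self, mul_zero]
    | succ N ih =>
      have e1 : N + 1 + n = (N + n) + 1 := by ring
      rw [sum_range_succ, ih, e1, Finset.sum_Icc_succ_top (Nat.le_add_left 1 (N+n))]
      have e2 : (((N + n + 1 : ℕ)):ℂ) - 1/2 + (-w) = ((N:ℕ):ℂ) + (-s) := by
        push_cast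
        rw [hw]
        ring
      rw [e2]
      have e3 : x^(n+1) * (x⁻¹)^(N+n+1) = (x⁻¹)^N := by
        have hxk : x^(n+1) ≠ 0 := pow_ne_zero _ hx0
        field_simp
        rw [one_div, inv_pow, inv_pow, show N+n+1 = N+(n+1) by ring, pow_add]
        field_simp
        ring
      rw [div_eq_mul_inv]
      linear_combination (-(((N:ℕ):ℂ) + (-s))⁻¹) * e3
  have hphi2 : phi (-s) x⁻¹ = x^(n+1) * (L2 - D0) := by
    apply seqLim_eq
    have hL2' : Tendsto (fun N : ℕ => ∑ j ∈ Icc 1 (N+n), (x⁻¹)^j * ((j:ℂ) - 1/2 + (-w))⁻¹)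
        atTop (nhds L2) := hL2.comp (tendsto_add_atTop_nat n)
    have h := (hL2'.sub (tendsto_const_nhds (x := D0))).const_mul (x^(n+1))
    apply Tendsto.congr ?_ h
    intro N
    exact (hI2 N).symm
  -- bracket identity
  have hbracket : C0 + x^(n+1) * D0 = 1/s := by
    have hC0' : C0 = 1/s + ∑ i ∈ range n, x^(i+1) / (((i+1:ℕ):ℂ) + s) := by
      rw [hC0def, Finset.sum_range_succ']
      rw [pow_zero, Nat.cast_zero, zero_add, add_comm]
    have hD0' : x^(n+1) * D0
        = ∑ i ∈ range n, (x^(n+1) * (x⁻¹)^(i+1) * (((i+1:ℕ):ℂ) - 1/2 + (-w))⁻¹) := by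
      rw [hD0def, Finset.mul_sum, sum_Icc1]
      apply sum_congr rfl
      intro i _
      ring
    have hrefl : ∑ i ∈ range n, (x^(n+1) * (x⁻¹)^(i+1) * (((i+1:ℕ):ℂ) - 1/2 + (-w))⁻¹)
        = ∑ i ∈ range n, -(x^(i+1) / (((i+1:ℕ):ℂ) + s)) := by
      conv_lhs => rw [← Finset.sum_range_reflect]
      apply sum_congr rfl
      intro i hi
      have hin : i < n := Finset.mem_range.mp hi
      have e0 : n - 1 - i + 1 = n - i := by omega
      rw [e0]
      have ecast : ((n - i:ℕ):ℂ) = (n:ℂ) - (i:ℂ) := by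
        rw [Nat.cast_sub (by omega : i ≤ n)]
      have epow : x^(n+1) * (x⁻¹)^(n-i) = x^(i+1) := by
        have hxk : x^(n-i) ≠ 0 := pow_ne_zero _ hx0
        rw [inv_pow]
        field_simp
        rw [← pow_add]
        congr 1
        omega
      have eden : ((n - i:ℕ):ℂ) - 1/2 + (-w) = -((((i+1:ℕ)):ℂ) + s) := by
        rw [ecast, hw]
        push_cast
        ring
      rw [eden, epow, inv_neg, div_eq_mul_inv]
      ring
    rw [hC0', hD0', hrefl]
    rw [Finset.sum_neg_distrib]
    ring
  -- final assembly
  rw [PhiFn, hphi1, hphi2, hRHS]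
  rw [← hbracket]
  ring
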